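/- Let m ≥ 1 and let n₀, n₁ ≥ 0 be integers with n₀ + n₁ ≥ 1 and n₀ > m·n₁. Then the number of m-admissible words over {0,1} of length n₀ + n₁ containing exactly n₀ zeros and n₁ ones satisfies: (number of such words) · (n₀ + n₁) = (n₀ − m·n₁) · C(n₀ + n₁, n₁), where C denotes the binomial coefficient. (Equivalently, the number of lattice paths from the origin to (n₀, n₁) that stay strictly above the line x = m·y after the start equals ((n₀ − m·n₁)/(n₀ + n₁))·C(n₀ + n₁, n₁).) -/

import Mathlib

open scoped Classical

/-- The contribution of a letter: `0 ↦ +1`, `1 ↦ -m`. -/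
def xiVal (m : ℕ) (b : Bool) : ℤ := if b then -(m : ℤ) else 1

/-- A word over `{0,1}` is `m`-admissible if every nonempty partial sum of the
values `ξ(0)=1`, `ξ(1)=-m` is strictly positive. -/
def mAdmissible (m : ℕ) (w : List Bool) : Prop :=
  ∀ k, 1 ≤ k → k ≤ w.length → 0 < ((w.take k).map (xiVal m)).sum

namespace CycleAux

def wsum (m : ℕ) (l : List Bool) : ℤ := (l.map (xiVal m)).sum

/-- every nonempty suffix has positive sum -/
def coAdm (m : ℕ) : List Bool → Prop
  | [] => True
  | b :: l => 0 < wsum m (b :: l) ∧ coAdm m l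

lemma coAdm_cons {m : ℕ} {b : Bool} {l : List Bool} :
    coAdm m (b :: l) ↔ 0 < wsum m (b :: l) ∧ coAdm m l := Iff.rfl

lemma wsum_eq (m : ℕ) (l : List Bool) :
    wsum m l = (l.count false : ℤ) - m * l.count true := by
  induction l with
  | nil => simp [wsum]
  | cons b l ih =>
    cases b <;> simp [wsum, xiVal, List.count_cons] at ih ⊢ <;> push_cast <;> linarith

lemma coAdm_iff (m : ℕ) (l : List Bool) :
    coAdm m l ↔ ∀ k, k < l.length → 0 < wsum m (l.drop k) := by
  induction l with
  | nil => simp [coAdm]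
  | cons b t ih =>
    rw [coAdm_cons]
    constructor
    · rintro ⟨h0, hc⟩ k hk
      cases k with
      | zero => simpa using h0
      | succ j =>
        rw [List.drop_succ_cons]
        exact ih.1 hc j (by simpa using hk)
    · intro h
      refine ⟨by simpa using h 0 (by simp), ih.2 fun j hj => ?_⟩
      simpa [List.drop_succ_cons] using h (j + 1) (by simpa using hj)

lemma wsum_reverse (m : ℕ) (l : List Bool) : wsum m l.reverse = wsum m l := by
  simp [wsum, List.map_reverse, List.sum_reverse]

lemma mAdmissible_iff (m : ℕ) (w : List Bool) :
    mAdmissible m w ↔ coAdm m w.reverse := by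
  rw [coAdm_iff]
  have haux : ∀ j, wsum m (w.reverse.drop j) = wsum m (w.take (w.length - j)) := by
    intro j
    rw [List.drop_reverse, wsum_reverse]
  constructor
  · intro h k hk
    rw [List.length_reverse] at hk
    rw [haux k]
    exact h (w.length - k) (by omega) (by omega)
  · intro h k hk1 hk2
    have := h (w.length - k) (by rw [List.length_reverse]; omega)
    rw [haux] at this
    have hk' : w.length - (w.length - k) = k := by omega
    rw [hk'] at this
    exact this

lemma count_ofFn : ∀ {n : ℕ} (w : Fin n → Bool) (b : Bool),
    (List.ofFn w).count b = (Finset.univ.filter fun i => w i = b).card := by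
  intro n
  induction n with
  | zero => intro w b; simp
  | succ n ih =>
    intro w b
    rw [List.ofFn_succ, List.count_cons,
      Fin.card_filter_univ_succ' (fun i => w i = b), ih]
    cases hw : w 0 <;> cases b <;> simp [hw, add_comm]

noncomputable def allB : ℕ → Finset (List Bool)
  | 0 => {[]}
  | n + 1 => (allB n).image (List.cons true) ∪ (allB n).image (List.cons false)

lemma mem_allB : ∀ {n : ℕ} {l : List Bool}, l ∈ allB n ↔ l.length = n := by
  intro n
  induction n with
  | zero => intro l; simp [allB, List.length_eq_zero_iff]
  | succ n ih =>
    intro l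
    simp only [allB, Finset.mem_union, Finset.mem_image]
    constructor
    · rintro (⟨t, ht, rfl⟩ | ⟨t, ht, rfl⟩) <;> simp [ih.1 ht]
    · intro h
      cases l with
      | nil => simp at h
      | cons b t =>
        cases b
        · exact Or.inr ⟨t, ih.2 (by simpa using h), rfl⟩
        · exact Or.inl ⟨t, ih.2 (by simpa using h), rfl⟩

noncomputable def Wd (m n0 n1 : ℕ) : Finset (List Bool) :=
  (allB (n0 + n1)).filter fun l => coAdm m l ∧ l.count true = n1 ∧ l.count false = n0

lemma mem_Wd {m n0 n1 : ℕ} {l : List Bool} :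
    l ∈ Wd m n0 n1 ↔
      l.length = n0 + n1 ∧ coAdm m l ∧ l.count true = n1 ∧ l.count false = n0 := by
  simp [Wd, mem_allB]

lemma coAdm_replicate (m n : ℕ) : coAdm m (List.replicate n false) := by
  induction n with
  | zero => trivial
  | succ n ih =>
    rw [List.replicate_succ, coAdm_cons]
    refine ⟨?_, ih⟩
    rw [show (false :: List.replicate n false) = List.replicate (n + 1) false from
      List.replicate_succ.symm, wsum_eq]
    simp [List.count_replicate]

lemma Wd_nil (m n0 : ℕ) : Wd m n0 0 = {List.replicate n0 false} := by
  ext l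
  rw [mem_Wd, Finset.mem_singleton]
  constructor
  · rintro ⟨hlen, hc, ht, hf⟩
    rw [List.eq_replicate_iff]
    refine ⟨by omega, fun b hb => ?_⟩
    cases b
    · rfl
    · exfalso
      have := List.count_pos_iff.2 hb
      omega
  · rintro rfl
    refine ⟨by simp, coAdm_replicate m n0, by simp [List.count_replicate], by simp [List.count_replicate]⟩

lemma Wd_empty (m n0 n1 : ℕ) (h1 : 1 ≤ n0 + n1) (h : n0 ≤ m * n1) : Wd m n0 n1 = ∅ := by
  ext l
  simp only [Finset.notMem_empty, iff_false]
  rw [mem_Wd]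
  rintro ⟨hlen, hc, ht, hf⟩
  have h0 : 0 < l.length := by omega
  have hlt := (coAdm_iff m l).1 hc 0 h0
  rw [List.drop_zero, wsum_eq, ht, hf] at hlt
  have hc' : (n0 : ℤ) ≤ (m : ℤ) * n1 := by exact_mod_cast h
  linarith

lemma Wd_rec (m n0 n1 : ℕ) (hpos : m * n1 < n0) (hn : 1 ≤ n1) :
    (Wd m n0 n1).card = (Wd m (n0 - 1) n1).card + (Wd m n0 (n1 - 1)).card := by
  have hn0 : 1 ≤ n0 := Nat.lt_of_le_of_lt (Nat.zero_le _) hpos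
  have key : Wd m n0 n1 =
      (Wd m (n0 - 1) n1).image (List.cons false) ∪
      (Wd m n0 (n1 - 1)).image (List.cons true) := by
    ext l
    simp only [Finset.mem_union, Finset.mem_image, mem_Wd]
    constructor
    · rintro ⟨hlen, hc, ht, hf⟩
      cases l with
      | nil => simp at ht; omega
      | cons b t =>
        rw [coAdm_cons] at hc
        simp only [List.length_cons] at hlen
        cases b
        · left
          refine ⟨t, ⟨by omega, hc.2, ?_, ?_⟩, rfl⟩
          · simpa [List.count_cons] using ht
          · simp only [List.count_cons] at hf
            simp at hf
            omega
        · right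
          refine ⟨t, ⟨by omega, hc.2, ?_, ?_⟩, rfl⟩
          · simp only [List.count_cons] at ht
            simp at ht
            omega
          · simpa [List.count_cons] using hf
    · rintro (⟨t, ⟨hlen, hc, ht, hf⟩, rfl⟩ | ⟨t, ⟨hlen, hc, ht, hf⟩, rfl⟩)
      · have hct : (false :: t).count true = n1 := by simpa [List.count_cons] using ht
        have hcf : (false :: t).count false = n0 := by
          simp [List.count_cons, hf]; omega
        refine ⟨by simp; omega, coAdm_cons.2 ⟨?_, hc⟩, hct, hcf⟩
        rw [wsum_eq, hct, hcf]
        have : (m : ℤ) * n1 < n0 := by exact_mod_cast hpos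
        linarith
      · have hct : (true :: t).count true = n1 := by
          simp [List.count_cons, ht]; omega
        have hcf : (true :: t).count false = n0 := by simpa [List.count_cons] using hf
        refine ⟨by simp; omega, coAdm_cons.2 ⟨?_, hc⟩, hct, hcf⟩
        rw [wsum_eq, hct, hcf]
        have : (m : ℤ) * n1 < n0 := by exact_mod_cast hpos
        linarith
  have hdisj : Disjoint ((Wd m (n0 - 1) n1).image (List.cons false))
      ((Wd m n0 (n1 - 1)).image (List.cons true)) := by
    rw [Finset.disjoint_left]
    rintro l hl1 hl2
    simp only [Finset.mem_image] at hl1 hl2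
    obtain ⟨t, _, rfl⟩ := hl1
    obtain ⟨t', _, h⟩ := hl2
    simp at h
  rw [key, Finset.card_union_of_disjoint hdisj,
    Finset.card_image_of_injective _ (List.cons_injective),
    Finset.card_image_of_injective _ (List.cons_injective)]

lemma key (m : ℕ) : ∀ n n0 n1 : ℕ, n0 + n1 = n → 1 ≤ n → m * n1 < n0 →
    ((Wd m n0 n1).card : ℤ) * n = ((n0 : ℤ) - (m : ℤ) * n1) * (Nat.choose n n1 : ℤ) := by
  intro n
  induction n using Nat.strong_induction_on with
  | _ n IH =>
    intro n0 n1 hsum hn hlt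
    have hn0 : 1 ≤ n0 := Nat.lt_of_le_of_lt (Nat.zero_le _) hlt
    rcases Nat.eq_zero_or_pos n1 with h1 | h1
    · subst h1
      have hn0n : n0 = n := by omega
      subst hn0n
      rw [Wd_nil m n0, Finset.card_singleton]
      simp [Nat.choose_zero_right]
    · obtain ⟨j, rfl⟩ : ∃ j, n1 = j + 1 := ⟨n1 - 1, by omega⟩
      subst hsum
      have hrec := Wd_rec m n0 (j + 1) hlt (by omega)
      have hmj : m * j < n0 := by
        have : m * j ≤ m * (j + 1) := Nat.mul_le_mul (le_refl m) (Nat.le_succ j)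
        omega
      have hB := IH (n0 + j) (by omega) n0 j rfl (by omega) hmj
      have hA : ((Wd m (n0 - 1) (j + 1)).card : ℤ) * ((n0 : ℤ) + j)
          = ((n0 : ℤ) - 1 - (m : ℤ) * ((j : ℤ) + 1)) * (Nat.choose (n0 + j) (j + 1) : ℤ) := by
        rcases lt_or_ge (m * (j + 1)) (n0 - 1) with h | h
        · have := IH (n0 + j) (by omega) (n0 - 1) (j + 1) (by omega) (by omega) h
          rw [Nat.cast_sub hn0] at this
          push_cast at this ⊢
          linarith
        · have heq : m * (j + 1) + 1 = n0 := by
            have h' : m * (j + 1) ≤ n0 - 1 := by omega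
            omega
          have hz : Wd m (n0 - 1) (j + 1) = ∅ := Wd_empty _ _ _ (by omega) (by omega)
          rw [hz, Finset.card_empty]
          have hc : ((n0 : ℤ) - 1 - (m : ℤ) * ((j : ℤ) + 1)) = 0 := by
            have hci := congrArg (fun x : ℕ => (x : ℤ)) heq
            push_cast at hci
            linarith
          rw [hc]
          ring
      have hpascal : (Nat.choose (n0 + j + 1) (j + 1) : ℤ)
          = (Nat.choose (n0 + j) j : ℤ) + (Nat.choose (n0 + j) (j + 1) : ℤ) := by
        exact_mod_cast Nat.choose_succ_succ (n0 + j) j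
      have habsorb : ((n0 : ℤ) + j + 1) * (Nat.choose (n0 + j) j : ℤ)
          = (Nat.choose (n0 + j + 1) (j + 1) : ℤ) * ((j : ℤ) + 1) := by
        exact_mod_cast Nat.add_one_mul_choose_eq (n0 + j) j
      have hne : ((n0 : ℤ) + j) ≠ 0 := by
        omega
      refine mul_right_cancel₀ hne ?_
      rw [hrec]
      simp only [show n0 + (j + 1) = n0 + j + 1 from by omega]
      push_cast at hB ⊢
      linear_combination ((n0 : ℤ) + j + 1) * hA + ((n0 : ℤ) + j + 1) * hB
        + (-(((n0 : ℤ) + j + 1) * ((n0 : ℤ) - 1 - (m : ℤ) * ((j : ℤ) + 1)))) * hpascal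
        + (1 + (m : ℤ)) * habsorb

end CycleAux

/-- The number of `m`-admissible words of length `n₀+n₁` with `n₀` zeros and
`n₁` ones, multiplied by `n₀+n₁`, equals `(n₀ − m·n₁)·C(n₀+n₁, n₁)`. -/
theorem card_mAdmissible_words (m n0 n1 : ℕ) (hm : 1 ≤ m)
    (h1 : 1 ≤ n0 + n1) (h2 : m * n1 < n0) :
    (Finset.univ.filter (fun w : Fin (n0 + n1) → Bool =>
        mAdmissible m (List.ofFn w) ∧
        (Finset.univ.filter (fun i => w i = true)).card = n1 ∧
        (Finset.univ.filter (fun i => w i = false)).card = n0)).card * (n0 + n1)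
      = (n0 - m * n1) * Nat.choose (n0 + n1) n1 := by
  have hcard : (Finset.univ.filter (fun w : Fin (n0 + n1) → Bool =>
        mAdmissible m (List.ofFn w) ∧
        (Finset.univ.filter (fun i => w i = true)).card = n1 ∧
        (Finset.univ.filter (fun i => w i = false)).card = n0)).card
      = (CycleAux.Wd m n0 n1).card := by
    apply Finset.card_bij (fun w _ => (List.ofFn w).reverse)
    · intro w hw
      simp only [Finset.mem_filter, Finset.mem_univ, true_and] at hw
      obtain ⟨hadm, ht, hf⟩ := hw
      rw [CycleAux.mem_Wd]
      refine ⟨by simp, (CycleAux.mAdmissible_iff m _).1 hadm, ?_, ?_⟩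
      · rw [List.count_reverse, CycleAux.count_ofFn]; exact ht
      · rw [List.count_reverse, CycleAux.count_ofFn]; exact hf
    · intro a _ b _ h
      exact List.ofFn_injective (List.reverse_injective h)
    · intro l hl
      rw [CycleAux.mem_Wd] at hl
      obtain ⟨hlen, hc, ht, hf⟩ := hl
      have hlen' : l.reverse.length = n0 + n1 := by simp [hlen]
      refine ⟨fun i => l.reverse.get (Fin.cast hlen'.symm i), ?_, ?_⟩
      all_goals
        have hofn : List.ofFn (fun i => l.reverse.get (Fin.cast hlen'.symm i)) = l.reverse := by
          apply List.ext_get (by simp [hlen'])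
          intro i hi1 hi2
          simp [List.get_ofFn]
      · simp only [Finset.mem_filter, Finset.mem_univ, true_and]
        refine ⟨?_, ?_, ?_⟩
        · rw [CycleAux.mAdmissible_iff, hofn, List.reverse_reverse]; exact hc
        · rw [← CycleAux.count_ofFn, hofn, List.count_reverse]; exact ht
        · rw [← CycleAux.count_ofFn, hofn, List.count_reverse]; exact hf
      · rw [hofn, List.reverse_reverse]
  rw [hcard]
  have hk := CycleAux.key m (n0 + n1) n0 n1 rfl h1 h2
  have h2' : m * n1 ≤ n0 := le_of_lt h2
  zify [h2']
  push_cast at hk ⊢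
  linear_combination hk
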